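/- Let K be a field of characteristic ≠ 2, let q > 0 be an integer, and let M be a q×q matrix with entries in the formal power series ring K⟦X⟧ that is skew-symmetric (Mᵀ = −M). For each integer k ≥ 1, let ψ_k : B_k^q → B_k^q be the B_k-linear map given by (the reduction of) M, where B_k := K⟦X⟧/(X^k). Then the dimension of the image of ψ_k as a K-vector space is even. -/

import Mathlib

open Matrix

/-- Auxiliary: the key linear-algebra lemma.  If `R` is a finite-dimensional commutative
`K`-algebra equipped with a "trace" functional `l` whose multiplication pairing is
nondegenerate, then any skew-symmetric matrix over `R` has range of even `K`-dimension. -/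
theorem aux_rest_even_rank (K : Type*) [Field K] (h2 : (2:K) ≠ 0)
    (R : Type*) [CommRing R] [Algebra K R] [Module.Finite K R]
    (l : R →ₗ[K] K) (hl : ∀ r : R, (∀ s : R, l (s * r) = 0) → r = 0)
    (q : ℕ) (ψ : (Fin q → R) →ₗ[R] (Fin q → R))
    (ψK : (Fin q → R) →ₗ[K] (Fin q → R)) (hψK : ψK = ψ.restrictScalars K)
    (ω : (Fin q → R) →ₗ[K] (Fin q → R) →ₗ[K] K)
    (hωapp' : ∀ u v, ω u v = l (∑ i, u i * ψ v i))
    (hanti : ∀ u v, ω v u = - ω u v) :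
    Even (Module.finrank K (Submodule.restrictScalars K (LinearMap.range ψ))) := by
  classical
  have hker : ∀ v, (∀ u, ω u v = 0) → ψ v = 0 := by
    intro v hv
    funext i
    refine hl (ψ v i) fun s => ?_
    have h := hv (Pi.single i s)
    rw [hωapp'] at h
    rwa [Finset.sum_eq_single i (fun b _ hb => by simp [Pi.single_eq_of_ne hb])
      (fun h => absurd (Finset.mem_univ i) h), Pi.single_eq_same] at h
  have hzero : ∀ u v, ψ v = 0 → ω u v = 0 := by
    intro u v hv
    rw [hωapp', hv]
    simp
  set p : Submodule K (Fin q → R) := LinearMap.ker ψK with hp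
  have hmem : ∀ v, v ∈ p ↔ ψ v = 0 := by
    intro v
    rw [hp, LinearMap.mem_ker, hψK]
    exact Iff.rfl
  set W := (Fin q → R) ⧸ p with hW
  have hWfd : FiniteDimensional K W := inferInstance
  set f : (Fin q → R) → (W →ₗ[K] K) :=
    fun u => p.liftQ (ω u) (fun v hv => hzero u v ((hmem v).1 hv)) with hf
  have hfmk : ∀ u v, f u (Submodule.Quotient.mk v) = ω u v := by
    intro u v; rw [hf]; exact Submodule.liftQ_apply _ _ _
  set ωq : (Fin q → R) →ₗ[K] (W →ₗ[K] K) :=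
    { toFun := f
      map_add' := by
        intro u u'
        apply LinearMap.ext
        intro w
        obtain ⟨v, rfl⟩ := Submodule.Quotient.mk_surjective p w
        simp [hfmk]
      map_smul' := by
        intro c u
        apply LinearMap.ext
        intro w
        obtain ⟨v, rfl⟩ := Submodule.Quotient.mk_surjective p w
        simp [hfmk] } with hωq
  set ω' : W →ₗ[K] W →ₗ[K] K := p.liftQ ωq (by
    intro u hu
    rw [LinearMap.mem_ker, hωq]
    apply LinearMap.ext
    intro w
    obtain ⟨v, rfl⟩ := Submodule.Quotient.mk_surjective p w
    simp only [LinearMap.coe_mk, AddHom.coe_mk, hfmk, LinearMap.zero_apply]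
    rw [hanti v u, hzero v u ((hmem u).1 hu), neg_zero]) with hω'
  have hω'mk : ∀ u v, ω' (Submodule.Quotient.mk u) (Submodule.Quotient.mk v) = ω u v := by
    intro u v
    rw [hω', Submodule.liftQ_apply, hωq]
    exact hfmk u v
  have hnd : LinearMap.BilinForm.Nondegenerate ω' := by
    refine LinearMap.BilinForm.Nondegenerate.ofSeparatingLeft ?_
    intro w hw
    obtain ⟨v, rfl⟩ := Submodule.Quotient.mk_surjective p w
    rw [Submodule.Quotient.mk_eq_zero]
    refine (hmem v).2 (hker v fun u => ?_)
    have := hw (Submodule.Quotient.mk u)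
    rw [hω'mk] at this
    rw [hanti v u, this, neg_zero]
  -- antisymmetry descends
  have hanti' : ∀ w w' : W, ω' w' w = - ω' w w' := by
    intro w w'
    obtain ⟨v, rfl⟩ := Submodule.Quotient.mk_surjective p w
    obtain ⟨u, rfl⟩ := Submodule.Quotient.mk_surjective p w'
    rw [hω'mk, hω'mk]
    exact hanti v u
  -- matrix of the form
  set n := Module.finrank K W with hn
  set b : Module.Basis (Fin n) K W := Module.finBasis K W with hb
  set A : Matrix (Fin n) (Fin n) K := LinearMap.BilinForm.toMatrix b ω' with hA
  have hAT : Aᵀ = -A := by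
    ext i j
    rw [Matrix.transpose_apply, Matrix.neg_apply, hA,
      LinearMap.BilinForm.toMatrix_apply, LinearMap.BilinForm.toMatrix_apply]
    exact hanti' (b i) (b j)
  have hdet : A.det ≠ 0 := by
    rw [hA, ← LinearMap.BilinForm.nondegenerate_iff_det_ne_zero b]
    exact hnd
  have hev : Even n := by
    rcases Nat.even_or_odd n with h | hodd
    · exact h
    exfalso
    have h1 : A.det = -A.det := by
      conv_lhs => rw [← Matrix.det_transpose, hAT]
      rw [Matrix.det_neg, Fintype.card_fin, Odd.neg_one_pow hodd, neg_one_mul]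
    have h2' : (2:K) * A.det = 0 := by
      rw [two_mul]
      exact add_eq_zero_iff_eq_neg.mpr h1
    exact hdet ((mul_eq_zero.mp h2').resolve_left h2)
  -- transfer to the range
  have hrange : Submodule.restrictScalars K (LinearMap.range ψ) = LinearMap.range ψK := by
    ext x
    simp only [Submodule.restrictScalars_mem, LinearMap.mem_range, hψK,
      LinearMap.restrictScalars_apply]
  rw [hrange]
  have := (LinearMap.quotKerEquivRange ψK).finrank_eq
  rw [← hp] at this
  rw [← this]
  exact hev

/-- Auxiliary: a skew-symmetric matrix over a finite-dimensional commutative `K`-algebra with a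
nondegenerate trace functional has range of even `K`-dimension. -/
theorem aux_even_rank (K : Type*) [Field K] (h2 : (2:K) ≠ 0)
    (R : Type*) [CommRing R] [Algebra K R] [Module.Finite K R]
    (l : R →ₗ[K] K) (hl : ∀ r : R, (∀ s : R, l (s * r) = 0) → r = 0)
    (q : ℕ) (N : Matrix (Fin q) (Fin q) R) (hN : Nᵀ = -N) :
    Even (Module.finrank K
      (Submodule.restrictScalars K (LinearMap.range (Matrix.toLin' N)))) := by
  classical
  set ψ : (Fin q → R) →ₗ[R] (Fin q → R) := Matrix.toLin' N with hψ
  set ψK : (Fin q → R) →ₗ[K] (Fin q → R) := ψ.restrictScalars K with hψK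
  have hψapp : ∀ v : Fin q → R, ∀ i, ψ v i = ∑ j, N i j * v j := by
    intro v i
    rw [hψ, Matrix.toLin'_apply]
    rfl
  -- the bilinear form
  set ω : (Fin q → R) →ₗ[K] (Fin q → R) →ₗ[K] K :=
    LinearMap.mk₂ K (fun u v => l (∑ i, u i * ψ v i))
    (by intro u u' v; simp [Pi.add_apply, add_mul, map_add, Finset.sum_add_distrib])
    (by intro c u v; simp [Pi.smul_apply, smul_mul_assoc, _root_.map_smul,
          Finset.mul_sum, smul_eq_mul])
    (by intro u v v'; simp [Pi.add_apply, mul_add, map_add, Finset.sum_add_distrib])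
    (by intro c u v; simp [Pi.smul_apply, mul_smul_comm, _root_.map_smul,
          Finset.mul_sum, smul_eq_mul])
    with hω
  have hωapp : ∀ u v : Fin q → R, ω u v = l (∑ i, ∑ j, N i j * (u i * v j)) := by
    intro u v
    simp only [hω, LinearMap.mk₂_apply]
    congr 1
    refine Finset.sum_congr rfl fun i _ => ?_
    rw [hψapp, Finset.mul_sum]
    exact Finset.sum_congr rfl fun j _ => by ring
  have hanti : ∀ u v : Fin q → R, ω v u = - ω u v := by
    intro u v
    rw [hωapp, hωapp, ← map_neg]
    congr 1
    rw [Finset.sum_comm, ← Finset.sum_neg_distrib]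
    refine Finset.sum_congr rfl fun i _ => ?_
    rw [← Finset.sum_neg_distrib]
    refine Finset.sum_congr rfl fun j _ => ?_
    have hji : N j i = -N i j := by
      have := congrFun (congrFun hN i) j
      simpa using this
    rw [hji]; ring
  have hωapp' : ∀ u v, ω u v = l (∑ i, u i * ψ v i) := by
    intro u v
    rw [hω]
    rfl
  exact aux_rest_even_rank K h2 R l hl q ψ ψK hψK ω hωapp' hanti

/-- Auxiliary: `K⟦X⟧ ⧸ (X^k)` is a finite `K`-module. -/
theorem aux_finite (K : Type*) [Field K] (k : ℕ) :
    Module.Finite K (PowerSeries K ⧸ Ideal.span {(PowerSeries.X : PowerSeries K) ^ k}) := by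
  classical
  set I : Ideal (PowerSeries K) := Ideal.span {(PowerSeries.X : PowerSeries K) ^ k} with hI
  rw [Module.finite_def, Submodule.fg_def]
  refine ⟨Set.range fun i : Fin k =>
    Ideal.Quotient.mk I ((PowerSeries.X : PowerSeries K) ^ (i : ℕ)),
    Set.finite_range _, ?_⟩
  rw [Submodule.eq_top_iff']
  intro r
  obtain ⟨f, rfl⟩ := Ideal.Quotient.mk_surjective r
  have key : Ideal.Quotient.mk I f
      = ∑ i : Fin k, (PowerSeries.coeff i f) •
          Ideal.Quotient.mk I ((PowerSeries.X : PowerSeries K) ^ (i : ℕ)) := by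
    have hsm : ∀ (a : K) (g : PowerSeries K),
        a • Ideal.Quotient.mk I g = Ideal.Quotient.mk I (PowerSeries.C a * g) := by
      intro a g
      have h1 : (PowerSeries.C a) * g = a • g := by rw [Algebra.smul_def]; rfl
      rw [h1]
      exact (map_smul (Ideal.Quotient.mkₐ K I) a g).symm
    simp_rw [hsm, ← map_sum]
    rw [Ideal.Quotient.mk_eq_mk_iff_sub_mem, hI, Ideal.mem_span_singleton]
    rw [PowerSeries.X_pow_dvd_iff]
    intro m hm
    rw [map_sub, map_sum]
    rw [Finset.sum_eq_single (⟨m, hm⟩ : Fin k)]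
    · simp
    · intro b _ hb
      have : (b : ℕ) ≠ m := by
        intro h; apply hb; ext; exact h
      simp [PowerSeries.coeff_C_mul, PowerSeries.coeff_X_pow, this, Ne.symm this]
    · intro h; exact absurd (Finset.mem_univ _) h
  rw [key]
  exact Submodule.sum_mem _ fun i _ =>
    Submodule.smul_mem _ _ (Submodule.subset_span ⟨i, rfl⟩)

/-- Auxiliary: the trace functional on `K⟦X⟧ ⧸ (X^k)` given by the `(k-1)`-st coefficient. -/
noncomputable def auxl (K : Type*) [Field K] (k : ℕ) (hk : 1 ≤ k) :
    (PowerSeries K ⧸ Ideal.span {(PowerSeries.X : PowerSeries K) ^ k}) →ₗ[K] K :=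
  (Submodule.liftQ ((Ideal.span {(PowerSeries.X : PowerSeries K) ^ k}).restrictScalars K)
    (PowerSeries.coeff (k-1))
    (by
      intro f hf
      rw [LinearMap.mem_ker]
      have : (PowerSeries.X : PowerSeries K) ^ k ∣ f := by
        rw [← Ideal.mem_span_singleton]
        exact hf
      exact (PowerSeries.X_pow_dvd_iff.mp this) (k-1) (Nat.sub_lt hk Nat.one_pos))) ∘ₗ
  (Submodule.Quotient.restrictScalarsEquiv K
    ((Ideal.span {(PowerSeries.X : PowerSeries K) ^ k}) :
      Submodule (PowerSeries K) (PowerSeries K))).symm.toLinearMap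

theorem auxl_mk (K : Type*) [Field K] (k : ℕ) (hk : 1 ≤ k) (f : PowerSeries K) :
    auxl K k hk (Ideal.Quotient.mk (Ideal.span {(PowerSeries.X : PowerSeries K) ^ k}) f)
      = PowerSeries.coeff (k-1) f := by
  rw [auxl]
  rw [LinearMap.comp_apply, LinearEquiv.coe_toLinearMap, ← Ideal.Quotient.mk_eq_mk,
    Submodule.Quotient.restrictScalarsEquiv_symm_mk, Submodule.liftQ_apply]

theorem auxl_nondeg (K : Type*) [Field K] (k : ℕ) (hk : 1 ≤ k)
    (r : PowerSeries K ⧸ Ideal.span {(PowerSeries.X : PowerSeries K) ^ k})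
    (h : ∀ s, auxl K k hk (s * r) = 0) : r = 0 := by
  obtain ⟨f, rfl⟩ := Ideal.Quotient.mk_surjective r
  by_contra hne
  rw [Ideal.Quotient.eq_zero_iff_mem, Ideal.mem_span_singleton] at hne
  rw [PowerSeries.X_pow_dvd_iff] at hne
  push_neg at hne
  obtain ⟨m, hm, hcoeff⟩ := hne
  have := h (Ideal.Quotient.mk _ ((PowerSeries.X : PowerSeries K) ^ (k - 1 - m)))
  rw [← _root_.map_mul, auxl_mk] at this
  rw [PowerSeries.coeff_X_pow_mul'] at this
  rw [if_pos (Nat.sub_le _ _)] at this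
  have hsub : k - 1 - (k - 1 - m) = m := by omega
  rw [hsub] at this
  exact hcoeff this

/-- Let `K` be a field of characteristic `≠ 2`, `q > 0`, and `M` a `q × q`
skew-symmetric matrix over the formal power series ring `K⟦X⟧`.  For `k ≥ 1`, the `Bₖ`-linear
map `ψₖ : Bₖ^q → Bₖ^q` induced by the reduction of `M` modulo `X^k`
(where `Bₖ := K⟦X⟧ ⧸ (X^k)`) has image of even dimension as a `K`-vector space. -/
theorem even_finrank_range_of_skew_powerseries
    (K : Type*) [Field K] (hK : ringChar K ≠ 2)
    (q : ℕ) (hq : 0 < q)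
    (M : Matrix (Fin q) (Fin q) (PowerSeries K))
    (hM : Mᵀ = -M)
    (k : ℕ) (hk : 1 ≤ k) :
    Even (Module.finrank K
      (Submodule.restrictScalars K
        (LinearMap.range (Matrix.toLin'
          (M.map (Ideal.Quotient.mk
            (Ideal.span {(PowerSeries.X : PowerSeries K) ^ k}))))))) := by
  classical
  have h2 : (2:K) ≠ 0 := Ring.two_ne_zero hK
  haveI : Module.Finite K
      (PowerSeries K ⧸ Ideal.span {(PowerSeries.X : PowerSeries K) ^ k}) := aux_finite K k
  set N := M.map (Ideal.Quotient.mk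
    (Ideal.span {(PowerSeries.X : PowerSeries K) ^ k})) with hNdef
  have hN : Nᵀ = -N := by
    ext i j
    rw [Matrix.transpose_apply, Matrix.neg_apply, hNdef, Matrix.map_apply, Matrix.map_apply]
    have hij : M j i = -M i j := by
      have := congrFun (congrFun hM i) j
      simpa using this
    rw [hij, RingHom.map_neg]
  exact aux_even_rank K h2 _ (auxl K k hk) (auxl_nondeg K k hk) q N hN
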